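/- Let X be a collectionwise normal space and 𝒰 an open cover of X. Then 𝒰 admits a 𝒰-small partition of unity if and only if 𝒰 has a σ-discrete closed refinement. -/

import Mathlib

noncomputable section
open Set Topology TopologicalSpace

/-- `𝒰` is an open cover of `X`. -/
def IsOpenCover {X : Type} [TopologicalSpace X] (𝒰 : Set (Set X)) : Prop :=
  (∀ U ∈ 𝒰, IsOpen U) ∧ ⋃₀ 𝒰 = univ

/-- Star of a point with respect to a family of sets. -/
def ptStar {X : Type} (x : X) (𝒰 : Set (Set X)) : Set X := ⋃₀ {U | U ∈ 𝒰 ∧ x ∈ U}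

/-- Star of a set with respect to a family of sets. -/
def setStar {X : Type} (A : Set X) (𝒰 : Set (Set X)) : Set X :=
  ⋃₀ {U | U ∈ 𝒰 ∧ (U ∩ A).Nonempty}

/-- `𝒱` star-refines `𝒰`. -/
def StarRefines {X : Type} (𝒱 𝒰 : Set (Set X)) : Prop :=
  ∀ x : X, ∃ U ∈ 𝒰, ptStar x 𝒱 ⊆ U

/-- A continuous partition of unity viewed as a map into `l¹(S)` with image in `Δ(S)`. -/
def IsPU {X S : Type} [TopologicalSpace X] (f : X → lp (fun _ : S => ℝ) 1) : Prop :=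
  Continuous f ∧ ∀ x : X, (∀ s : S, 0 ≤ f x s) ∧ HasSum (fun s => f x s) 1

/-- The partition of unity `f` is `𝒰`-small: each carrier lies in a member of `𝒰`. -/
def IsUSmall {X S : Type} [TopologicalSpace X] (𝒰 : Set (Set X))
    (f : X → lp (fun _ : S => ℝ) 1) : Prop :=
  ∀ s : S, ∃ U ∈ 𝒰, {x : X | f x s ≠ 0} ⊆ U

/-- There exists a `𝒰`-small partition of unity on `X`. -/
def ExistsUSmallPU {X : Type} [TopologicalSpace X] (𝒰 : Set (Set X)) : Prop :=
  ∃ (S : Type) (f : X → lp (fun _ : S => ℝ) 1), IsPU f ∧ IsUSmall 𝒰 f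

/-- An indexed family of sets is discrete. -/
def DiscreteFam {X S : Type} [TopologicalSpace X] (A : S → Set X) : Prop :=
  ∀ x : X, ∃ N ∈ nhds x, {s : S | (A s ∩ N).Nonempty}.Subsingleton

/-- A family of sets (as a set of sets) is discrete. -/
def DiscreteSetFam {X : Type} [TopologicalSpace X] (𝒜 : Set (Set X)) : Prop :=
  ∀ x : X, ∃ N ∈ nhds x, {A | A ∈ 𝒜 ∧ (A ∩ N).Nonempty}.Subsingleton

/-- `𝒰` has a σ-discrete closed refinement. -/
def HasSigmaDiscreteClosedRefinement {X : Type} [TopologicalSpace X]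
    (𝒰 : Set (Set X)) : Prop :=
  ∃ D : ℕ → Set (Set X), (∀ n, DiscreteSetFam (D n)) ∧
    (∀ n, ∀ F ∈ D n, IsClosed F) ∧
    (∀ n, ∀ F ∈ D n, ∃ U ∈ 𝒰, F ⊆ U) ∧
    ⋃₀ (⋃ n, D n) = univ

/-- `X` is collectionwise normal. -/
def CwNormal (X : Type) [TopologicalSpace X] : Prop :=
  ∀ (S : Type) (A : S → Set X), (∀ s, IsClosed (A s)) → DiscreteFam A →
    ∃ V : S → Set X, (∀ s, IsOpen (V s)) ∧ (∀ s, A s ⊆ V s) ∧ DiscreteFam V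


namespace Stmt10Aux
open Filter

lemma lp_norm {S : Type} (a : lp (fun _ : S => ℝ) 1) : ‖a‖ = ∑' s, |a s| := by
  have := lp.norm_eq_tsum_rpow (p := 1) (by norm_num) a
  simpa using this

lemma lp_summ {S : Type} (a : lp (fun _ : S => ℝ) 1) : Summable (fun s => a s) := by
  have h := lp.memℓp a
  rw [memℓp_gen_iff (p := 1) (by norm_num)] at h
  simp only [ENNReal.toReal_one, Real.rpow_one] at h
  exact h.of_abs

/-- Key: a pointwise partition of unity with continuous coordinates is continuous into l¹. -/
lemma continuous_into_lp {X S : Type} [TopologicalSpace X]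
    (F : X → lp (fun _ : S => ℝ) 1)
    (hcont : ∀ s, Continuous fun x => F x s)
    (h0 : ∀ x s, 0 ≤ F x s)
    (h1 : ∀ x, HasSum (fun s => F x s) 1) :
    Continuous F := by
  rw [continuous_iff_continuousAt]
  intro x
  rw [ContinuousAt, Metric.tendsto_nhds]
  intro ε hε
  set ε' := ε / 5 with hε'def
  have hε' : 0 < ε' := by positivity
  obtain ⟨T, hT⟩ : ∃ T : Finset S, dist (∑ s ∈ T, F x s) 1 < ε' :=
    (Metric.tendsto_nhds.1 (h1 x) ε' hε').exists
  have hTx : 1 - ε' < ∑ s ∈ T, F x s := by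
    rw [Real.dist_eq, abs_lt] at hT; linarith [hT.1, hT.2]
  have hTx' : ∑ s ∈ T, F x s ≤ 1 := sum_le_hasSum T (fun s _ => h0 x s) (h1 x)
  set δ := ε' / (T.card + 1) with hδdef
  have hδ : 0 < δ := by positivity
  have hev : ∀ᶠ y in nhds x, ∀ s ∈ T, |F y s - F x s| < δ := by
    rw [eventually_all_finset]
    intro s _
    have h2 : Tendsto (fun y => |F y s - F x s|) (nhds x) (nhds (|F x s - F x s|)) :=
      (((hcont s).sub continuous_const).abs).continuousAt
    simp only [sub_self, abs_zero] at h2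
    filter_upwards [(Metric.tendsto_nhds.1 h2) δ hδ] with y hy
    rwa [Real.dist_eq, sub_zero, abs_abs] at hy
  filter_upwards [hev] with y hy
  have hsT : ∑ s ∈ T, |F y s - F x s| ≤ ε' := by
    have hcard : (T.card : ℝ) * δ ≤ ε' := by
      rw [hδdef]
      have h1 : (T.card : ℝ) ≤ T.card + 1 := by linarith
      calc (T.card : ℝ) * (ε' / (T.card + 1)) ≤ (T.card + 1) * (ε' / (T.card + 1)) :=
            mul_le_mul_of_nonneg_right h1 (by positivity)
        _ = ε' := by field_simp
    calc ∑ s ∈ T, |F y s - F x s| ≤ ∑ _s ∈ T, δ := Finset.sum_le_sum (fun s hs => (hy s hs).le)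
      _ = T.card * δ := by simp [mul_comm]
      _ ≤ ε' := hcard
  have hTy : 1 - 2 * ε' < ∑ s ∈ T, F y s := by
    have : ∑ s ∈ T, F x s - ∑ s ∈ T, F y s ≤ ε' := by
      rw [← Finset.sum_sub_distrib]
      calc ∑ s ∈ T, (F x s - F y s) ≤ ∑ s ∈ T, |F y s - F x s| := by
            apply Finset.sum_le_sum; intro s _; rw [abs_sub_comm]; exact le_abs_self _
        _ ≤ ε' := hsT
    linarith
  have hTy' : ∑ s ∈ T, F y s ≤ 1 := sum_le_hasSum T (fun s _ => h0 y s) (h1 y)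
  have hsum : Summable (fun s => |F y s - F x s|) := ((lp_summ (F y)).sub (lp_summ (F x))).abs
  have hdist : dist (F y) (F x) = ∑' s, |F y s - F x s| := by
    rw [dist_eq_norm, lp_norm]
    apply tsum_congr; intro s
    congr 1
  rw [hdist]
  have hsplit := Summable.sum_add_tsum_subtype_compl hsum T
  have hy1 : ∑' s : {s // s ∉ T}, (F y s : ℝ) = 1 - ∑ s ∈ T, F y s := by
    have := Summable.sum_add_tsum_subtype_compl (lp_summ (F y)) T
    rw [(h1 y).tsum_eq] at this; linarith
  have hx1 : ∑' s : {s // s ∉ T}, (F x s : ℝ) = 1 - ∑ s ∈ T, F x s := by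
    have := Summable.sum_add_tsum_subtype_compl (lp_summ (F x)) T
    rw [(h1 x).tsum_eq] at this; linarith
  have hcompl : ∑' s : {s // s ∉ T}, |F y s - F x s| ≤
      (1 - ∑ s ∈ T, F y s) + (1 - ∑ s ∈ T, F x s) := by
    calc ∑' s : {s // s ∉ T}, |F y s - F x s|
        ≤ ∑' s : {s // s ∉ T}, ((F y s : ℝ) + F x s) := by
          apply Summable.tsum_le_tsum _ (hsum.subtype _)
            (((lp_summ (F y)).subtype _).add ((lp_summ (F x)).subtype _))
          intro s
          exact (abs_sub _ _).trans (by
            simp [abs_of_nonneg (h0 y _), abs_of_nonneg (h0 x _)])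
      _ = (1 - ∑ s ∈ T, F y s) + (1 - ∑ s ∈ T, F x s) := by
          have hA : Summable (fun s : {s // s ∉ T} => (F y s : ℝ)) :=
            ((lp_summ (F y)).subtype _).congr (fun _ => rfl)
          have hB : Summable (fun s : {s // s ∉ T} => (F x s : ℝ)) :=
            ((lp_summ (F x)).subtype _).congr (fun _ => rfl)
          rw [Summable.tsum_add hA hB, hy1, hx1]
  have hfinal : ∑' s, |F y s - F x s| ≤ ε' + ((1 - ∑ s ∈ T, F y s) + (1 - ∑ s ∈ T, F x s)) := by
    rw [← hsplit]; exact add_le_add hsT hcompl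
  have h5 : ε' * 5 = ε := by rw [hε'def]; ring
  linarith


lemma memℓp_of {S : Type} (f : S → ℝ) (h : Summable f) : Memℓp f 1 := by
  apply memℓp_gen
  simp only [ENNReal.toReal_one, Real.rpow_one]
  exact h.abs

lemma summable_subsing {ι : Type} {g : ι → ℝ} (h : {i | g i ≠ 0}.Subsingleton) : Summable g := by
  by_cases he : ∃ i, g i ≠ 0
  · obtain ⟨i₀, hi₀⟩ := he
    apply summable_of_ne_finset_zero (s := {i₀})
    intro b hb
    by_contra h0
    exact hb (by simp [h h0 hi₀])
  · push_neg at he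
    exact (summable_zero).congr (fun i => (he i).symm)

lemma tsum_le_one_subsing {ι : Type} {g : ι → ℝ} (h : {i | g i ≠ 0}.Subsingleton)
    (h1 : ∀ i, g i ≤ 1) : ∑' i, g i ≤ 1 := by
  by_cases he : ∃ i, g i ≠ 0
  · obtain ⟨i₀, hi₀⟩ := he
    have : ∑' i, g i = g i₀ := tsum_eq_single i₀ (fun b hb => by
      by_contra h0'; exact hb (h h0' hi₀))
    rw [this]; exact h1 i₀
  · push_neg at he
    rw [tsum_congr (fun i => he i), tsum_zero]; norm_num

set_option maxHeartbeats 1000000 in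
lemma reverse_dir {X : Type} [TopologicalSpace X] [NormalSpace X]
    (𝒰 : Set (Set X)) (hUopen : ∀ U ∈ 𝒰, IsOpen U)
    (D : ℕ → Set (Set X))
    (hcl : ∀ n, ∀ F ∈ D n, IsClosed F)
    (hcov : ⋃₀ (⋃ n, D n) = univ)
    (V : ∀ n, {F : Set X // F ∈ D n} → Set X)
    (hVo : ∀ n F, IsOpen (V n F))
    (hVs : ∀ n F, F.1 ⊆ V n F)
    (hVd : ∀ n, DiscreteFam (V n))
    (U : ∀ n, {F : Set X // F ∈ D n} → Set X)
    (hUm : ∀ n F, U n F ∈ 𝒰)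
    (hFU : ∀ n F, F.1 ⊆ U n F) :
    ∃ (S : Type) (f : X → lp (fun _ : S => ℝ) 1),
      (Continuous f ∧ ∀ x : X, (∀ s : S, 0 ≤ f x s) ∧ HasSum (fun s => f x s) 1) ∧
      (∀ s : S, ∃ W ∈ 𝒰, {x : X | f x s ≠ 0} ⊆ W) := by
  classical
  -- Urysohn functions
  have hg : ∀ (n : ℕ) (F : {F : Set X // F ∈ D n}), ∃ g : C(X, ℝ),
      EqOn g 0 (V n F ∩ U n F)ᶜ ∧ EqOn g 1 F.1 ∧ ∀ x, g x ∈ Icc (0:ℝ) 1 := by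
    intro n F
    have hW : IsOpen (V n F ∩ U n F) := (hVo n F).inter (hUopen _ (hUm n F))
    have hdj : Disjoint (V n F ∩ U n F)ᶜ F.1 := by
      rw [Set.disjoint_compl_left_iff_subset]
      exact subset_inter (hVs n F) (hFU n F)
    exact exists_continuous_zero_one_of_isClosed hW.isClosed_compl (hcl n F.1 F.2) hdj
  choose g hg0 hg1 hg01 using hg
  have hgnn : ∀ n F x, 0 ≤ g n F x := fun n F x => (hg01 n F x).1
  have hgle : ∀ n F x, g n F x ≤ 1 := fun n F x => (hg01 n F x).2
  have hsupp : ∀ n F x, g n F x ≠ 0 → x ∈ V n F ∩ U n F := by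
    intro n F x hx
    by_contra h
    exact hx (hg0 n F h)
  -- per-n subsingleton support
  have hss : ∀ (n : ℕ) (x : X), {F : {F : Set X // F ∈ D n} | g n F x ≠ 0}.Subsingleton := by
    intro n x F hF F' hF'
    obtain ⟨N, hN, hsub⟩ := hVd n x
    exact hsub ⟨x, (hsupp n F x hF).1, mem_of_mem_nhds hN⟩
      ⟨x, (hsupp n F' x hF').1, mem_of_mem_nhds hN⟩
  have hσsum : ∀ n x, Summable (fun F : {F : Set X // F ∈ D n} => g n F x) :=
    fun n x => summable_subsing (hss n x)
  set σ : ℕ → X → ℝ := fun n x => ∑' F : {F : Set X // F ∈ D n}, g n F x with hσ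
  have hσ0 : ∀ n x, 0 ≤ σ n x := fun n x => tsum_nonneg (fun F => hgnn n F x)
  have hσ1 : ∀ n x, σ n x ≤ 1 := fun n x => tsum_le_one_subsing (hss n x) (fun F => hgle n F x)
  have hσge : ∀ n (F : {F : Set X // F ∈ D n}) x, g n F x ≤ σ n x :=
    fun n F x => Summable.le_tsum (hσsum n x) F (fun F' _ => hgnn n F' x)
  -- continuity of σ n
  have hσcont : ∀ n, Continuous (σ n) := by
    intro n
    rw [continuous_iff_continuousAt]
    intro x
    obtain ⟨N, hN, hsub⟩ := hVd n x
    by_cases hex : ∃ F, (V n F ∩ N).Nonempty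
    · obtain ⟨F₀, hF₀⟩ := hex
      have hev : σ n =ᶠ[nhds x] (fun y => g n F₀ y) := by
        filter_upwards [hN] with y hyN
        apply tsum_eq_single F₀
        intro F hF
        by_contra h0
        exact hF (hsub ⟨y, (hsupp n F y h0).1, hyN⟩ hF₀)
      exact ContinuousAt.congr ((g n F₀).continuous.continuousAt) hev.symm
    · have hev : σ n =ᶠ[nhds x] (fun _ => (0:ℝ)) := by
        filter_upwards [hN] with y hyN
        have : ∀ F, g n F y = 0 := by
          intro F
          by_contra h0
          exact hex ⟨F, y, (hsupp n F y h0).1, hyN⟩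
        rw [hσ]; simp only [this, tsum_zero]
      exact ContinuousAt.congr continuousAt_const hev.symm
  -- the normalizing function H
  have hu : Summable (fun n : ℕ => ((2:ℝ)⁻¹) ^ (n + 1)) := by
    have := summable_geometric_of_lt_one (show (0:ℝ) ≤ 2⁻¹ by norm_num) (by norm_num)
    simpa [pow_succ] using this.mul_right 2⁻¹
  have hterm_nn : ∀ x (n : ℕ), 0 ≤ ((2:ℝ)⁻¹) ^ (n + 1) * σ n x :=
    fun x n => mul_nonneg (by positivity) (hσ0 n x)
  have hterm_le : ∀ x (n : ℕ), ((2:ℝ)⁻¹) ^ (n + 1) * σ n x ≤ ((2:ℝ)⁻¹) ^ (n + 1) := by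
    intro x n
    nth_rewrite 2 [← mul_one (((2:ℝ)⁻¹) ^ (n + 1))]
    exact mul_le_mul_of_nonneg_left (hσ1 n x) (by positivity)
  have hHsum : ∀ x, Summable (fun n : ℕ => ((2:ℝ)⁻¹) ^ (n + 1) * σ n x) := by
    intro x
    exact Summable.of_nonneg_of_le (hterm_nn x) (hterm_le x) hu
  set H : X → ℝ := fun x => ∑' n, ((2:ℝ)⁻¹) ^ (n + 1) * σ n x with hH
  have hHcont : Continuous H := by
    apply continuous_tsum
    · intro n; exact continuous_const.mul (hσcont n)
    · exact hu
    · intro n x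
      rw [Real.norm_eq_abs, abs_of_nonneg (hterm_nn x n)]
      exact hterm_le x n
  have hHpos : ∀ x, 0 < H x := by
    intro x
    have hx : x ∈ ⋃₀ (⋃ n, D n) := by rw [hcov]; trivial
    obtain ⟨F, hFmem, hxF⟩ := hx
    rw [mem_iUnion] at hFmem
    obtain ⟨n, hFn⟩ := hFmem
    have h1 : g n ⟨F, hFn⟩ x = 1 := hg1 n ⟨F, hFn⟩ hxF
    have h2 : (1:ℝ) ≤ σ n x := h1 ▸ hσge n ⟨F, hFn⟩ x
    have h3 : ((2:ℝ)⁻¹) ^ (n + 1) * 1 ≤ ((2:ℝ)⁻¹) ^ (n + 1) * σ n x :=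
      mul_le_mul_of_nonneg_left h2 (by positivity)
    have h4 : ((2:ℝ)⁻¹) ^ (n + 1) * σ n x ≤ H x :=
      Summable.le_tsum (hHsum x) n (fun m _ => hterm_nn x m)
    have : (0:ℝ) < ((2:ℝ)⁻¹) ^ (n + 1) := by positivity
    linarith
  -- the index type and coordinates
  set c : X → (Σ n : ℕ, {F : Set X // F ∈ D n}) → ℝ := fun x s => (((2:ℝ)⁻¹) ^ (s.1 + 1) * g s.1 s.2 x) / H x with hc
  have hcnn : ∀ x s, 0 ≤ c x s :=
    fun x s => div_nonneg (mul_nonneg (by positivity) (hgnn s.1 s.2 x)) (hHpos x).le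
  -- summability over the sigma type
  have hbig : ∀ x, Summable (fun s : Σ n : ℕ, {F : Set X // F ∈ D n} => ((2:ℝ)⁻¹) ^ (s.1 + 1) * g s.1 s.2 x) := by
    intro x
    have hnn : ∀ s : Σ n : ℕ, {F : Set X // F ∈ D n},
        0 ≤ ((2:ℝ)⁻¹) ^ (s.1 + 1) * g s.1 s.2 x :=
      fun s => mul_nonneg (pow_nonneg (by norm_num) _) (hgnn s.1 s.2 x)
    have hfib : ∀ n : ℕ, Summable (fun F : {F : Set X // F ∈ D n} =>
        ((2:ℝ)⁻¹) ^ (n + 1) * g n F x) := fun n => (hσsum n x).mul_left _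
    have htail : Summable (fun n : ℕ => ∑' F : {F : Set X // F ∈ D n},
        ((2:ℝ)⁻¹) ^ (n + 1) * g n F x) := by
      apply Summable.congr (hHsum x)
      intro n
      rw [tsum_mul_left]
    exact (summable_sigma_of_nonneg hnn).2 ⟨hfib, htail⟩
  have hbigsum : ∀ x, HasSum (fun s : Σ n : ℕ, {F : Set X // F ∈ D n} => ((2:ℝ)⁻¹) ^ (s.1 + 1) * g s.1 s.2 x) (H x) := by
    intro x
    have := (hbig x).hasSum
    have heq : ∑' s : Σ n : ℕ, {F : Set X // F ∈ D n}, ((2:ℝ)⁻¹) ^ (s.1 + 1) * g s.1 s.2 x = H x := by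
      rw [Summable.tsum_sigma (hbig x)]
      rw [hH]
      apply tsum_congr
      intro n
      show ∑' F : {F : Set X // F ∈ D n}, ((2:ℝ)⁻¹) ^ (n + 1) * g n F x = _
      rw [tsum_mul_left]
    rwa [heq] at this
  have hchs : ∀ x, HasSum (c x) 1 := by
    intro x
    have := (hbigsum x).div_const (H x)
    rwa [div_self (hHpos x).ne'] at this
  have hmem : ∀ x, Memℓp (c x) 1 := fun x => memℓp_of _ (hchs x).summable
  set f : X → lp (fun _ : (Σ n : ℕ, {F : Set X // F ∈ D n}) => ℝ) 1 := fun x => ⟨c x, hmem x⟩ with hf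
  have hfapp : ∀ x s, f x s = c x s := fun x s => rfl
  refine ⟨Σ n : ℕ, {F : Set X // F ∈ D n}, f, ⟨?_, ?_⟩, ?_⟩
  · -- continuity into lp 1 via the key lemma
    apply continuous_into_lp f
    · intro s
      simp only [hfapp]
      exact (continuous_const.mul (g s.1 s.2).continuous).div hHcont (fun x => (hHpos x).ne')
    · intro x s; exact hcnn x s
    · intro x; exact hchs x
  · intro x
    exact ⟨fun s => hcnn x s, hchs x⟩
  · rintro ⟨n, F⟩
    refine ⟨U n F, hUm n F, ?_⟩
    intro x hx
    simp only [hfapp, mem_setOf_eq] at hx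
    have hnum : g n F x ≠ 0 := by
      intro h0
      apply hx
      rw [hc]
      simp [h0]
    exact (hsupp n F x hnum).2

lemma normal_of_cw {X : Type} [TopologicalSpace X] (hX : CwNormal X) : NormalSpace X := by
  constructor
  intro s t hs ht hd
  set A : Bool → Set X := fun b => bif b then s else t with hA
  have hAc : ∀ b, IsClosed (A b) := by intro b; cases b <;> simpa [hA]
  have hAd : DiscreteFam A := by
    intro x
    by_cases hxs : x ∈ s
    · have hxt : x ∉ t := fun hxt => hd.ne_of_mem hxs hxt rfl
      refine ⟨tᶜ, ht.isOpen_compl.mem_nhds hxt, ?_⟩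
      intro a ha b hb
      have : ∀ c : Bool, ((A c ∩ tᶜ).Nonempty) → c = true := by
        intro c hc; cases c
        · exfalso; obtain ⟨y, hy1, hy2⟩ := hc; exact hy2 (by simpa [hA] using hy1)
        · rfl
      rw [this a ha, this b hb]
    · refine ⟨sᶜ, hs.isOpen_compl.mem_nhds hxs, ?_⟩
      intro a ha b hb
      have : ∀ c : Bool, ((A c ∩ sᶜ).Nonempty) → c = false := by
        intro c hc; cases c
        · rfl
        · exfalso; obtain ⟨y, hy1, hy2⟩ := hc; exact hy2 (by simpa [hA] using hy1)
      rw [this a ha, this b hb]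
  obtain ⟨V, hVo, hVs, hVd⟩ := hX Bool A hAc hAd
  refine ⟨V true, V false, hVo true, hVo false, by simpa [hA] using hVs true,
    by simpa [hA] using hVs false, ?_⟩
  rw [Set.disjoint_iff_inter_eq_empty]
  by_contra h
  obtain ⟨x, hx1, hx2⟩ := Set.nonempty_iff_ne_empty.2 h
  obtain ⟨N, hN, hsub⟩ := hVd x
  have : (true : Bool) = false := hsub ⟨x, hx1, mem_of_mem_nhds hN⟩ ⟨x, hx2, mem_of_mem_nhds hN⟩
  simp at this


lemma lp_coord {S : Type} (a b : lp (fun _ : S => ℝ) 1) (s : S) : |a s - b s| ≤ dist a b := by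
  have h := lp.norm_apply_le_norm (E := fun _ : S => ℝ) (p := 1) (by norm_num) (a - b) s
  rw [dist_eq_norm]
  simpa using h

section Forward
variable {X S : Type} [TopologicalSpace X] (f : X → lp (fun _ : S => ℝ) 1)

/-- least element of the support of `f x` w.r.t. the well-ordering relation -/
def sL (hpu : ∀ x : X, (∀ s : S, 0 ≤ f x s) ∧ HasSum (fun s => f x s) 1) (x : X) : S :=
  (IsWellFounded.wf (r := WellOrderingRel (α := S))).min {s | f x s ≠ 0} (by
    by_contra h
    rw [Set.not_nonempty_iff_eq_empty] at h
    have h0 : ∀ s : S, f x s = 0 := by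
      intro s; by_contra hs
      exact absurd (show s ∈ {s | f x s ≠ 0} from hs) (by simp [h])
    have := (hpu x).2
    rw [show (fun s => f x s) = (fun _ => (0:ℝ)) from funext h0] at this
    exact one_ne_zero (α := ℝ) (this.unique hasSum_zero))

variable (hpu : ∀ x : X, (∀ s : S, 0 ≤ f x s) ∧ HasSum (fun s => f x s) 1)

lemma sL_mem (x : X) : f x (sL f hpu x) ≠ 0 :=
  (IsWellFounded.wf (r := WellOrderingRel (α := S))).min_mem {s | f x s ≠ 0} _

lemma sL_least (x : X) (t : S) (h : WellOrderingRel t (sL f hpu x)) : f x t = 0 := by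
  by_contra ht
  exact (IsWellFounded.wf (r := WellOrderingRel (α := S))).not_lt_min {s | f x s ≠ 0} ht h

/-- centers of the balls making up the refinement -/
def centers (n : ℕ) (s : S) : Set X :=
  {p | sL f hpu p = s ∧ ∀ y : X, dist (f y) (f p) < 3 * (2:ℝ)⁻¹ ^ n → f y s ≠ 0}

/-- the closed pieces -/
def Epiece (n : ℕ) (s : S) : Set X :=
  {y | (centers f hpu n s).Nonempty ∧
    Metric.infDist (f y) (f '' centers f hpu n s) ≤ (2:ℝ)⁻¹ ^ (n + 1)}

lemma Epiece_closed (hfc : Continuous f) (n : ℕ) (s : S) : IsClosed (Epiece f hpu n s) := by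
  by_cases h : (centers f hpu n s).Nonempty
  · have : Epiece f hpu n s =
        (fun y => Metric.infDist (f y) (f '' centers f hpu n s)) ⁻¹' Iic ((2:ℝ)⁻¹ ^ (n + 1)) := by
      ext y; simp [Epiece, h]
    rw [this]
    exact IsClosed.preimage ((Metric.continuous_infDist_pt _).comp hfc) isClosed_Iic
  · have : Epiece f hpu n s = ∅ := by
      ext y; simp [Epiece, h]
    rw [this]; exact isClosed_empty

lemma Epiece_near (n : ℕ) (s : S) {y : X} (hy : y ∈ Epiece f hpu n s) :
    ∃ p ∈ centers f hpu n s, dist (f y) (f p) < (2:ℝ)⁻¹ ^ n := by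
  obtain ⟨hne, hd⟩ := hy
  have hlt : Metric.infDist (f y) (f '' centers f hpu n s) < (2:ℝ)⁻¹ ^ n := by
    have : ((2:ℝ)⁻¹) ^ (n+1) < (2:ℝ)⁻¹ ^ n := by
      apply pow_lt_pow_right_of_lt_one₀ (by norm_num) (by norm_num) (by omega)
    linarith
  obtain ⟨z, hz, hzd⟩ := (Metric.infDist_lt_iff (hne.image f)).1 hlt
  obtain ⟨p, hp, rfl⟩ := hz
  exact ⟨p, hp, hzd⟩

lemma Epiece_subset (n : ℕ) (s : S) : Epiece f hpu n s ⊆ {x | f x s ≠ 0} := by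
  intro y hy
  obtain ⟨p, hp, hd⟩ := Epiece_near f hpu n s hy
  apply hp.2
  calc dist (f y) (f p) < (2:ℝ)⁻¹ ^ n := hd
    _ ≤ 3 * (2:ℝ)⁻¹ ^ n := by nlinarith [pow_pos (show (0:ℝ) < 2⁻¹ by norm_num) n]

lemma Epiece_sep (n : ℕ) (s t : S) (hst : s ≠ t) {y z : X}
    (hy : y ∈ Epiece f hpu n s) (hz : z ∈ Epiece f hpu n t) :
    (2:ℝ)⁻¹ ^ n < dist (f y) (f z) := by
  obtain ⟨p, hp, hdp⟩ := Epiece_near f hpu n s hy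
  obtain ⟨q, hq, hdq⟩ := Epiece_near f hpu n t hz
  have key : ∀ (a b : X) (u v : S), u ≠ v → a ∈ centers f hpu n u → b ∈ centers f hpu n v →
      WellOrderingRel u v → 3 * (2:ℝ)⁻¹ ^ n ≤ dist (f b) (f a) := by
    intro a b u v huv ha hb hlt
    by_contra hcon
    push_neg at hcon
    have : f b u ≠ 0 := ha.2 b hcon
    have hzero : f b u = 0 := by
      apply sL_least f hpu b
      rw [hb.1]
      exact hlt
    exact this hzero
  have htri : WellOrderingRel s t ∨ WellOrderingRel t s := by
    rcases trichotomous_of (WellOrderingRel (α := S)) s t with h | h | h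
    · exact Or.inl h
    · exact absurd h hst
    · exact Or.inr h
  have hpq : 3 * (2:ℝ)⁻¹ ^ n ≤ dist (f p) (f q) := by
    rcases htri with h | h
    · rw [dist_comm]; exact key p q s t hst hp hq h
    · exact key q p t s (Ne.symm hst) hq hp h
  have := dist_triangle4 (f p) (f y) (f z) (f q)
  rw [dist_comm (f p) (f y)] at this
  linarith
end Forward

section Fwd2
variable {X S : Type} [TopologicalSpace X] (f : X → lp (fun _ : S => ℝ) 1)
variable (hpu : ∀ x : X, (∀ s : S, 0 ≤ f x s) ∧ HasSum (fun s => f x s) 1)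

include hpu in
lemma forward_dir (𝒰 : Set (Set X)) (hfc : Continuous f)
    (hsmall : ∀ s, ∃ U ∈ 𝒰, {x : X | f x s ≠ 0} ⊆ U) :
    HasSigmaDiscreteClosedRefinement 𝒰 := by
  refine ⟨fun n => {A | ∃ s, A = Epiece f hpu n s ∧ A.Nonempty}, ?_, ?_, ?_, ?_⟩
  · -- discreteness
    intro n x
    refine ⟨(fun y => dist (f y) (f x)) ⁻¹' Iio ((2:ℝ)⁻¹ ^ (n+1)), ?_, ?_⟩
    · apply IsOpen.mem_nhds
      · exact IsOpen.preimage ((continuous_id.dist continuous_const).comp hfc) isOpen_Iio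
      · simp
    · rintro A ⟨⟨s, rfl, -⟩, y, hyA, hyN⟩ B ⟨⟨t, rfl, -⟩, z, hzB, hzN⟩
      rcases eq_or_ne s t with rfl | hst
      · rfl
      · exfalso
        have hsep := Epiece_sep f hpu n s t hst hyA hzB
        have h1 : dist (f y) (f x) < (2:ℝ)⁻¹ ^ (n+1) := hyN
        have h2 : dist (f z) (f x) < (2:ℝ)⁻¹ ^ (n+1) := hzN
        have := dist_triangle (f y) (f x) (f z)
        rw [dist_comm (f x) (f z)] at this
        have hpow : (2:ℝ)⁻¹ ^ (n+1) + (2:ℝ)⁻¹ ^ (n+1) = (2:ℝ)⁻¹ ^ n := by ring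
        linarith
  · rintro n A ⟨s, rfl, -⟩
    exact Epiece_closed f hpu hfc n s
  · rintro n A ⟨s, rfl, -⟩
    obtain ⟨U, hU, hsub⟩ := hsmall s
    exact ⟨U, hU, (Epiece_subset f hpu n s).trans hsub⟩
  · rw [eq_univ_iff_forall]
    intro x
    set s := sL f hpu x with hs
    have hv : 0 < f x s := lt_of_le_of_ne ((hpu x).1 s) (Ne.symm (sL_mem f hpu x))
    obtain ⟨n, hn⟩ : ∃ n : ℕ, (2:ℝ)⁻¹ ^ n < f x s / 3 :=
      exists_pow_lt_of_lt_one (by positivity) (by norm_num)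
    have h3 : 3 * (2:ℝ)⁻¹ ^ n ≤ f x s := by linarith
    have hcen : x ∈ centers f hpu n s := by
      refine ⟨hs.symm, fun y hy => ?_⟩
      have hc := lp_coord (f y) (f x) s
      intro h0
      rw [h0] at hc
      rw [abs_sub_comm, abs_of_nonneg (by linarith : (0:ℝ) ≤ f x s - 0)] at hc
      linarith
    have hxE : x ∈ Epiece f hpu n s := by
      refine ⟨⟨x, hcen⟩, ?_⟩
      have : Metric.infDist (f x) (f '' centers f hpu n s) ≤ dist (f x) (f x) :=
        Metric.infDist_le_dist_of_mem ⟨x, hcen, rfl⟩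
      simp only [dist_self] at this
      exact this.trans (by positivity)
    exact ⟨Epiece f hpu n s, mem_iUnion.2 ⟨n, ⟨s, rfl, ⟨x, hxE⟩⟩⟩, hxE⟩
end Fwd2
end Stmt10Aux

/-- In a collectionwise normal space, an open cover admits a small partition of unity iff
it has a σ-discrete closed refinement. -/
theorem stmt10 (X : Type) [TopologicalSpace X] (hX : CwNormal X)
    (𝒰 : Set (Set X)) (hcov : IsOpenCover 𝒰) :
    ExistsUSmallPU 𝒰 ↔ HasSigmaDiscreteClosedRefinement 𝒰 := by
  constructor
  · rintro ⟨S, f, ⟨hfc, hpu⟩, hsmall⟩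
    exact Stmt10Aux.forward_dir f hpu 𝒰 hfc hsmall
  · rintro ⟨D, hdisc, hcl, href, hcovD⟩
    have hnormal : NormalSpace X := Stmt10Aux.normal_of_cw hX
    have hfam : ∀ n, DiscreteFam (fun F : {F : Set X // F ∈ D n} => F.1) := by
      intro n x
      obtain ⟨N, hN, hsub⟩ := hdisc n x
      refine ⟨N, hN, ?_⟩
      intro F hF F' hF'
      exact Subtype.ext (hsub ⟨F.2, hF⟩ ⟨F'.2, hF'⟩)
    have hVs := fun n => hX {F : Set X // F ∈ D n} (fun F => F.1)
      (fun F => hcl n F.1 F.2) (hfam n)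
    choose V hVo hVsub hVd using hVs
    have hUs : ∀ n (F : {F : Set X // F ∈ D n}), ∃ U ∈ 𝒰, F.1 ⊆ U :=
      fun n F => href n F.1 F.2
    choose U hUm hFU using hUs
    obtain ⟨S, f, hf1, hf2⟩ := Stmt10Aux.reverse_dir 𝒰 hcov.1 D hcl hcovD
      V hVo hVsub hVd U hUm hFU
    exact ⟨S, f, hf1, hf2⟩
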